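/- Let Z be a smooth variety of odd dimension n over an algebraically closed field k of characteristic p = 2, m even, and let s ∈ H^0(Z, L^m) have an admissible critical point at q ∈ Z. Let P ∈ X = Z[ᵐ√s] be a singular point with π(P) = q, and let γ_e y^{ed} + ⋯ + γ_2 y^{2d} + y^d + q(x) + f = 0 be the local defining equation of the germ P ∈ X, with q(x) = βx_1² + x_2x_3 + x_4x_5 + ⋯ + x_{n-1}x_n. If d > 2, then β ≠ 0, i.e. x_1² appears in q(x) with nonzero coefficient. -/

import Mathlib

/-!
# Statement 6

Let `Z` be a smooth variety of odd dimension `n` over an algebraically closed field of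
characteristic `2`, `m` even, and let `s ∈ H⁰(Z, L^m)` have an *admissible* critical point
at `q ∈ Z`.  Let `P ∈ X = Z[ᵐ√s]` be a singular point over `q` and let
`γ_e y^{ed} + ⋯ + γ_2 y^{2d} + y^d + q(x) + f = 0`, with
`q(x) = β x_1² + x_2x_3 + ⋯ + x_{n-1}x_n`, be the local defining equation of the germ
`P ∈ X`.  If `d > 2` then `β ≠ 0`.

We work on a trivializing local chart centered at `q`, where `s` corresponds to the
polynomial `g = α + β₀x_1² + x_2x_3 + ⋯ + x_{n-1}x_n + f₀` (almost nondegenerate critical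
point in normal form), and `X = (y^m - g = 0) ⊆ 𝔸^{n+1}`.  The associated quadric
`T(s,q) ⊂ P^{n-1}` is the projective quadric cut out by the quadratic part of `g`;
admissibility requires it to be nonsingular whenever `4 ∣ m`, or whenever `m ≠ 2` and `s`
is singular at `q` (i.e. `α = 0`).  The local defining equation of the germ `P ∈ X` is
expressed via a coordinate change `φ` centered at `P`, as in Lemma 3.4 of the paper.
-/

open MvPolynomial

/-- The standard quadratic form: `x_1x_2 + x_3x_4 + ⋯ + x_{n-1}x_n` for `n` even, and
`β x_1² + x_2x_3 + x_4x_5 + ⋯ + x_{n-1}x_n` for `n` odd. -/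
noncomputable def stdQuad (k : Type*) [CommRing k] (n : ℕ) (β : k) :
    MvPolynomial (Fin n) k :=
  (∑ i : Fin (n / 2),
      X (⟨2 * i + n % 2, by have := i.isLt; omega⟩ : Fin n) *
        X (⟨2 * i + 1 + n % 2, by have := i.isLt; omega⟩ : Fin n)) +
    if h : n % 2 = 1 then C β * X (⟨0, by omega⟩ : Fin n) ^ 2 else 0

/-- `f` consists of monomials of degree at least `r`. -/
def OrderGE {k : Type*} [CommSemiring k] {σ : Type*} (f : MvPolynomial σ k) (r : ℕ) : Prop :=
  ∀ m ∈ f.support, r ≤ m.sum fun _ e => e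

/-- A homogeneous quadric `Q` defines a *nonsingular* projective quadric hypersurface:
there is no nonzero point of the quadric at which all partial derivatives vanish. -/
def SmoothQuadric {k : Type*} [CommSemiring k] {n : ℕ} (Q : MvPolynomial (Fin n) k) : Prop :=
  ∀ w : Fin n → k, w ≠ 0 → eval w Q = 0 → ∃ i, eval w (pderiv i Q) ≠ 0

namespace Stmt6Aux

variable {k : Type*} [CommRing k] {σ τ : Type*}

lemma mdeg_eq_degree (μ : σ →₀ ℕ) : (μ.sum fun _ e => e) = μ.degree := by
  simp [Finsupp.degree, Finsupp.sum]; rfl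

lemma orderGE_iff {f : MvPolynomial σ k} {r : ℕ} :
    OrderGE f r ↔ ∀ μ : σ →₀ ℕ, coeff μ f ≠ 0 → r ≤ μ.sum fun _ e => e := by
  unfold OrderGE
  simp [MvPolynomial.mem_support_iff]

lemma orderGE_coeff_eq_zero {f : MvPolynomial σ k} {r : ℕ} (h : OrderGE f r)
    {μ : σ →₀ ℕ} (hμ : (μ.sum fun _ e => e) < r) : coeff μ f = 0 := by
  by_contra hc
  exact absurd (orderGE_iff.mp h μ hc) (by omega)

lemma orderGE_zero (f : MvPolynomial σ k) : OrderGE f 0 := fun _ _ => Nat.zero_le _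

lemma orderGE_zero_poly (r : ℕ) : OrderGE (0 : MvPolynomial σ k) r := by
  simp [OrderGE]

lemma orderGE_mono {f : MvPolynomial σ k} {r s : ℕ} (h : OrderGE f r) (hs : s ≤ r) :
    OrderGE f s := fun μ hμ => le_trans hs (h μ hμ)

lemma orderGE_add {f g : MvPolynomial σ k} {r : ℕ} (hf : OrderGE f r) (hg : OrderGE g r) :
    OrderGE (f + g) r := by
  rw [orderGE_iff] at *
  intro μ hμ
  rw [coeff_add] at hμ
  rcases (by by_contra h; push_neg at h; simp [h.1, h.2] at hμ :
      coeff μ f ≠ 0 ∨ coeff μ g ≠ 0) with h | h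
  · exact hf μ h
  · exact hg μ h

lemma orderGE_sum {ι : Type*} (s : Finset ι) (f : ι → MvPolynomial σ k) {r : ℕ}
    (h : ∀ i ∈ s, OrderGE (f i) r) : OrderGE (∑ i ∈ s, f i) r := by
  classical
  induction s using Finset.induction_on with
  | empty => simpa using orderGE_zero_poly r
  | insert _ _ hx ih =>
    rename_i a s
    rw [Finset.sum_insert hx]
    exact orderGE_add (h a (by simp)) (ih fun i hi => h i (by simp [hi]))

lemma orderGE_mul {f g : MvPolynomial σ k} {r s : ℕ} (hf : OrderGE f r) (hg : OrderGE g s) :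
    OrderGE (f * g) (r + s) := by
  classical
  rw [orderGE_iff]
  intro μ hμ
  by_contra hlt
  push_neg at hlt
  apply hμ
  rw [coeff_mul]
  apply Finset.sum_eq_zero
  rintro ⟨a, b⟩ hab
  have hab' : a + b = μ := Finset.HasAntidiagonal.mem_antidiagonal.mp hab
  have hd : (a.sum fun _ e => e) + (b.sum fun _ e => e) = μ.sum fun _ e => e := by
    rw [← hab', Finsupp.sum_add_index' (fun _ => rfl) (fun _ _ _ => rfl)]
  rcases lt_or_ge (a.sum fun _ e => e) r with h | h
  · exact mul_eq_zero_of_left (orderGE_coeff_eq_zero hf h) _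
  · exact mul_eq_zero_of_right _ (orderGE_coeff_eq_zero hg (μ := b) (by omega))

lemma orderGE_pow {f : MvPolynomial σ k} {r : ℕ} (hf : OrderGE f r) (j : ℕ) :
    OrderGE (f ^ j) (j * r) := by
  induction j with
  | zero => simpa using orderGE_zero _
  | succ j ih =>
    rw [pow_succ, Nat.succ_mul]
    exact orderGE_mul ih hf

lemma orderGE_prod {ι : Type*} (s : Finset ι) (f : ι → MvPolynomial σ k) (r : ι → ℕ)
    (h : ∀ i ∈ s, OrderGE (f i) (r i)) :
    OrderGE (∏ i ∈ s, f i) (∑ i ∈ s, r i) := by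
  classical
  induction s using Finset.induction_on with
  | empty => simpa using orderGE_zero _
  | insert _ _ hx ih =>
    rename_i a s
    rw [Finset.prod_insert hx, Finset.sum_insert hx]
    exact orderGE_mul (h a (by simp)) (ih fun i hi => h i (by simp [hi]))

lemma orderGE_one {f : MvPolynomial σ k} (h : constantCoeff f = 0) : OrderGE f 1 := by
  rw [orderGE_iff]
  intro μ hμ
  by_contra hc
  push_neg at hc
  interval_cases hd : (μ.sum fun _ e => e)
  · have : μ = 0 := by
      rwa [mdeg_eq_degree, Finsupp.degree_eq_zero_iff] at hd
    subst this
    rw [← constantCoeff_eq] at hμ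
    exact hμ h

lemma orderGE_aeval {f : MvPolynomial σ k} {r : ℕ} (hf : OrderGE f r)
    (s : σ → MvPolynomial τ k) (hs : ∀ i, constantCoeff (s i) = 0) :
    OrderGE (MvPolynomial.aeval s f) r := by
  classical
  rw [aeval_def, eval₂_eq]
  apply orderGE_sum
  intro d hd
  have h1 : OrderGE (∏ i ∈ d.support, s i ^ d i) (∑ i ∈ d.support, d i) := by
    apply orderGE_prod
    intro i _
    simpa using orderGE_pow (orderGE_one (hs i)) (d i)
  have h2 : r ≤ ∑ i ∈ d.support, d i := by
    have := hf d hd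
    rwa [Finsupp.sum] at this
  have : OrderGE ((algebraMap k (MvPolynomial τ k)) (coeff d f) * ∏ i ∈ d.support, s i ^ d i)
      (0 + (∑ i ∈ d.support, d i)) := orderGE_mul (orderGE_zero _) h1
  exact orderGE_mono this (by omega)

lemma orderGE_rename {f : MvPolynomial σ k} {r : ℕ} (hf : OrderGE f r) (e : σ → τ) :
    OrderGE (MvPolynomial.rename e f) r := by
  rw [orderGE_iff]
  intro μ hμ
  obtain ⟨u, hu, hcu⟩ := coeff_rename_ne_zero e f μ hμ
  have hsum : (u.sum fun _ e => e) = μ.sum fun _ e => e := by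
    rw [← hu]
    exact (Finsupp.sum_mapDomain_index (h := fun _ (n : ℕ) => n) (fun _ => rfl) (fun _ _ _ => rfl)).symm
  rw [← hsum]
  exact orderGE_iff.mp hf u hcu

lemma homogComp_eq_zero_of_orderGE {f : MvPolynomial σ k} {r j : ℕ} (h : OrderGE f r)
    (hj : j < r) : homogeneousComponent j f = 0 := by
  ext μ
  rw [coeff_homogeneousComponent, coeff_zero]
  split
  · next hd =>
    exact orderGE_coeff_eq_zero h (by rw [mdeg_eq_degree, hd]; omega)
  · rfl

lemma homogComp_C (j : ℕ) (hj : j ≠ 0) (a : k) :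
    homogeneousComponent j (C a : MvPolynomial σ k) = 0 := by
  have := homogeneousComponent_of_mem (σ := σ) (R := k) (n := 0) (m := j)
    ((mem_homogeneousSubmodule 0 (C a)).mpr (isHomogeneous_C σ a))
  simpa [hj] using this

lemma orderGE_homogComp (j : ℕ) (f : MvPolynomial σ k) :
    OrderGE (homogeneousComponent j f) j := by
  rw [orderGE_iff]
  intro μ hμ
  rw [coeff_homogeneousComponent] at hμ
  split at hμ
  · next hd => rw [mdeg_eq_degree, hd]
  · exact absurd rfl hμ

lemma orderGE_two_remainder {f : MvPolynomial σ k} (h : constantCoeff f = 0) :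
    OrderGE (f - homogeneousComponent 1 f) 2 := by
  rw [orderGE_iff]
  intro μ hμ
  by_contra hc
  push_neg at hc
  apply hμ
  rw [coeff_sub, coeff_homogeneousComponent]
  interval_cases hd : (μ.sum fun _ e => e)
  · have h0 : μ = 0 := by rwa [mdeg_eq_degree, Finsupp.degree_eq_zero_iff] at hd
    subst h0
    have : (0 : σ →₀ ℕ).degree ≠ 1 := by simp [Finsupp.degree]
    rw [if_neg this, ← constantCoeff_eq, h]
    ring
  · rw [if_pos (by rw [← mdeg_eq_degree]; omega)]
    ring

variable {k : Type*} [CommRing k] {σ τ : Type*}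

lemma degree_one_classify (μ : σ →₀ ℕ) (h : (μ.sum fun _ e => e) = 1) :
    ∃ j, μ = Finsupp.single j 1 := by
  classical
  rw [mdeg_eq_degree] at h
  have hne : μ.support.Nonempty := by
    by_contra hc
    rw [Finset.not_nonempty_iff_eq_empty, Finsupp.support_eq_empty] at hc
    subst hc
    simp [Finsupp.degree] at h
  obtain ⟨j, hj⟩ := hne
  refine ⟨j, ?_⟩
  have hj1 : 1 ≤ μ j := Nat.one_le_iff_ne_zero.mpr (Finsupp.mem_support_iff.mp hj)
  have hle : μ j ≤ 1 := h ▸ Finsupp.le_degree j μ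
  ext t
  rcases eq_or_ne t j with rfl | ht
  · simp; omega
  · rw [Finsupp.single_eq_of_ne' (Ne.symm ht)]
    by_contra hc
    have htm : t ∈ μ.support := Finsupp.mem_support_iff.mpr hc
    have : μ j + μ t ≤ μ.degree := by
      have : ({j, t} : Finset σ) ⊆ μ.support := by
        intro x hx
        simp at hx
        rcases hx with rfl | rfl <;> assumption
      calc μ j + μ t = ∑ x ∈ ({j, t} : Finset σ), μ x := by
            rw [Finset.sum_pair (Ne.symm ht)]
        _ ≤ ∑ x ∈ μ.support, μ x := Finset.sum_le_sum_of_subset this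
        _ = μ.degree := rfl
    omega

lemma homog1_eq [Fintype σ] (f : MvPolynomial σ k) :
    homogeneousComponent 1 f = ∑ j, C (coeff (Finsupp.single j 1) f) * X j := by
  classical
  ext μ
  rw [coeff_homogeneousComponent]
  have hr : coeff μ (∑ j, C (coeff (Finsupp.single j 1) f) * X j) =
      ∑ j, if Finsupp.single j 1 = μ then coeff (Finsupp.single j 1) f else 0 := by
    rw [coeff_sum]
    congr 1
    ext j
    rw [coeff_C_mul, coeff_X']
    split <;> simp
  rw [hr]
  split
  · next hd =>
    obtain ⟨t, rfl⟩ := degree_one_classify μ (by rw [mdeg_eq_degree, hd])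
    rw [Finset.sum_eq_single t]
    · simp
    · intro j _ hj
      rw [if_neg]
      intro hc
      exact hj (Finsupp.single_left_injective one_ne_zero hc)
    · intro h; exact absurd (Finset.mem_univ t) h
  · next hd =>
    symm
    apply Finset.sum_eq_zero
    intro j _
    rw [if_neg]
    intro hc
    apply hd
    rw [← hc]
    rw [← mdeg_eq_degree]
    simp [Finsupp.sum_single_index]

lemma single_mdeg (j : σ) : ((Finsupp.single j 1 : σ →₀ ℕ).sum fun _ e => e) = 1 := by
  simp [Finsupp.sum_single_index]

lemma linear_coeff_aeval [Fintype σ] (s : σ → MvPolynomial τ k)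
    (hs : ∀ i, constantCoeff (s i) = 0) (f : MvPolynomial σ k)
    (hf : constantCoeff f = 0) (t : τ) :
    coeff (Finsupp.single t 1) (MvPolynomial.aeval s f) =
      ∑ j, coeff (Finsupp.single j 1) f * coeff (Finsupp.single t 1) (s j) := by
  classical
  have hsplit : MvPolynomial.aeval s f = MvPolynomial.aeval s (homogeneousComponent 1 f) +
      MvPolynomial.aeval s (f - homogeneousComponent 1 f) := by
    rw [← map_add]
    congr 1
    ring
  rw [hsplit, coeff_add]
  have h2 : coeff (Finsupp.single t 1)
      (MvPolynomial.aeval s (f - homogeneousComponent 1 f)) = 0 := by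
    apply orderGE_coeff_eq_zero (orderGE_aeval (orderGE_two_remainder hf) s hs)
    rw [single_mdeg]; omega
  rw [h2, add_zero, homog1_eq, map_sum, coeff_sum]
  apply Finset.sum_congr rfl
  intro j _
  rw [map_mul, aeval_C, aeval_X, algebraMap_eq, coeff_C_mul]

lemma homog2_of_isHomogeneous {f : MvPolynomial σ k} (hf : f.IsHomogeneous 2) :
    homogeneousComponent 2 f = f := by
  have := homogeneousComponent_of_mem (σ := σ) (R := k) (n := 2) (m := 2)
    ((mem_homogeneousSubmodule 2 f).mpr hf)
  simpa using this

lemma homog2_mul {f g : MvPolynomial σ k} (hf : constantCoeff f = 0)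
    (hg : constantCoeff g = 0) :
    homogeneousComponent 2 (f * g) =
      homogeneousComponent 1 f * homogeneousComponent 1 g := by
  set f1 := homogeneousComponent 1 f with hf1
  set g1 := homogeneousComponent 1 g with hg1
  have hsplit : f * g = f1 * g1 + (f1 * (g - g1) + ((f - f1) * g1 + (f - f1) * (g - g1))) := by
    ring
  rw [hsplit, map_add]
  have hrest : OrderGE (f1 * (g - g1) + ((f - f1) * g1 + (f - f1) * (g - g1))) 3 := by
    apply orderGE_add
    · exact orderGE_mul (orderGE_homogComp 1 f) (orderGE_two_remainder hg)
    apply orderGE_add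
    · exact orderGE_mono (orderGE_mul (orderGE_two_remainder hf) (orderGE_homogComp 1 g))
        (by omega)
    · exact orderGE_mono (orderGE_mul (orderGE_two_remainder hf) (orderGE_two_remainder hg))
        (by omega)
  rw [homogComp_eq_zero_of_orderGE hrest (by omega), add_zero]
  exact homog2_of_isHomogeneous
    ((homogeneousComponent_isHomogeneous 1 f).mul (homogeneousComponent_isHomogeneous 1 g))

lemma binom_orderGE (a : k) (B : MvPolynomial σ k) {r : ℕ} (hB : OrderGE B r) (e : ℕ) :
    OrderGE ((C a + B) ^ e - C (a ^ e)) r := by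
  induction e with
  | zero => simpa using orderGE_zero_poly r
  | succ e ih =>
    have hexp : (C a + B) ^ (e + 1) - C (a ^ (e + 1)) =
        ((C a + B) ^ e - C (a ^ e)) * (C a + B) + C (a ^ e) * B := by
      have : (C (a ^ (e + 1)) : MvPolynomial σ k) = C (a ^ e) * C a := by
        rw [← map_mul, ← pow_succ]
      rw [this]; ring
    rw [hexp]
    apply orderGE_add
    · exact orderGE_mono (orderGE_mul ih (orderGE_zero _)) (by omega)
    · exact orderGE_mono (orderGE_mul (orderGE_zero (C (a ^ e))) hB) (by omega)

lemma mv_isUnit_eq_C {k : Type*} [Field k] :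
    ∀ {N : ℕ} (p : MvPolynomial (Fin N) k), IsUnit p → ∃ c : k, c ≠ 0 ∧ p = C c := by
  intro N
  induction N with
  | zero =>
    intro p hp
    have heq := eq_C_of_isEmpty p
    refine ⟨coeff 0 p, ?_, heq⟩
    intro hc
    rw [hc, map_zero] at heq
    exact hp.ne_zero heq
  | succ N ih =>
    intro p hp
    have hq : IsUnit (finSuccEquiv k N p) := hp.map (finSuccEquiv k N)
    obtain ⟨r, hru, hCr⟩ := Polynomial.isUnit_iff.mp hq
    obtain ⟨c, hc0, rfl⟩ := ih r hru
    refine ⟨c, hc0, ?_⟩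
    have : p = (finSuccEquiv k N).symm (Polynomial.C (C c)) := by
      rw [hCr, AlgEquiv.symm_apply_apply]
    rw [this]
    have hcomp := finSuccEquiv_comp_C_eq_C (R := k) N
    exact congrFun (congrArg (fun f => f.toFun) hcomp) c

end Stmt6Aux
namespace Stmt6Aux
open MvPolynomial

lemma stdQuad_zero {k : Type*} [CommRing k] {n : ℕ} (h1 : n % 2 = 1) :
    stdQuad k n 0 = ∑ i : Fin (n / 2),
      X (⟨2 * i + n % 2, by have := i.isLt; omega⟩ : Fin n) *
        X (⟨2 * i + 1 + n % 2, by have := i.isLt; omega⟩ : Fin n) := by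
  rw [stdQuad, dif_pos h1, map_zero, zero_mul, add_zero]

lemma notSmoothPairs {k : Type*} [Field k] {n : ℕ} (h1 : n % 2 = 1) :
    ¬ SmoothQuadric (stdQuad k n 0) := by
  intro h
  have hn0 : 0 < n := by omega
  set w : Fin n → k := Pi.single (⟨0, hn0⟩ : Fin n) 1 with hw
  have hwa : ∀ i : Fin (n / 2),
      w (⟨2 * i + n % 2, by have := i.isLt; omega⟩ : Fin n) = 0 := by
    intro i
    apply Pi.single_eq_of_ne
    simp only [ne_eq, Fin.mk.injEq]
    omega
  have hwb : ∀ i : Fin (n / 2),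
      w (⟨2 * i + 1 + n % 2, by have := i.isLt; omega⟩ : Fin n) = 0 := by
    intro i
    apply Pi.single_eq_of_ne
    simp only [ne_eq, Fin.mk.injEq]
    omega
  have hwne : w ≠ 0 := by
    intro hc
    have := congrFun hc (⟨0, hn0⟩ : Fin n)
    simp [hw] at this
  have heval : eval w (stdQuad k n 0) = 0 := by
    rw [stdQuad_zero h1, map_sum]
    apply Finset.sum_eq_zero
    intro i _
    rw [eval_mul, eval_X, hwa i, zero_mul]
  obtain ⟨t, ht⟩ := h w hwne heval
  apply ht
  rw [stdQuad_zero h1, map_sum, map_sum]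
  apply Finset.sum_eq_zero
  intro i _
  rw [pderiv_mul, map_add, eval_mul, eval_mul, eval_X, eval_X, hwa i, hwb i,
    mul_zero, zero_mul, add_zero]

end Stmt6Aux
namespace Stmt6Aux
open MvPolynomial

lemma aeval_stdQuad {k : Type*} [CommRing k] {n N : ℕ} (h1 : n % 2 = 1)
    (β : k) (s : Fin n → MvPolynomial (Fin N) k) :
    MvPolynomial.aeval s (stdQuad k n β) =
      (∑ i : Fin (n / 2),
        s (⟨2 * i + n % 2, by have := i.isLt; omega⟩ : Fin n) *
          s (⟨2 * i + 1 + n % 2, by have := i.isLt; omega⟩ : Fin n)) +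
      C β * (s (⟨0, by omega⟩ : Fin n)) ^ 2 := by
  rw [stdQuad, dif_pos h1]
  simp only [map_add, map_sum, map_mul, map_pow, aeval_X, aeval_C, algebraMap_eq]

lemma rename_stdQuad_zero {k : Type*} [CommRing k] {n N : ℕ} (h1 : n % 2 = 1)
    (g : Fin n → Fin N) :
    MvPolynomial.rename g (stdQuad k n 0) =
      ∑ i : Fin (n / 2),
        X (g (⟨2 * i + n % 2, by have := i.isLt; omega⟩ : Fin n)) *
          X (g (⟨2 * i + 1 + n % 2, by have := i.isLt; omega⟩ : Fin n)) := by
  rw [stdQuad_zero h1]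
  simp only [map_sum, map_mul, rename_X]

lemma isHomogeneous_stdQuad_zero {k : Type*} [CommRing k] {n : ℕ} (h1 : n % 2 = 1) :
    (stdQuad k n 0).IsHomogeneous 2 := by
  rw [stdQuad_zero h1]
  apply MvPolynomial.IsHomogeneous.sum
  intro i _
  exact (isHomogeneous_X _ _).mul (isHomogeneous_X _ _)

end Stmt6Aux

open Stmt6Aux

/-- In characteristic `2` with `n` odd, for an admissible critical
point, if the local defining equation of the germ `P ∈ X` (as in the normal form of
Lemma 3.4) has `d > 2`, then `x_1²` appears in its quadratic part with nonzero
coefficient. -/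
theorem admissible_critical_point_beta_ne_zero {k : Type*} [Field k] [IsAlgClosed k]
    {n m : ℕ} [CharP k 2] (hn : Odd n) (hm : Even m) (hm0 : 0 < m)
    (α β₀ : k) (f₀ : MvPolynomial (Fin n) k) (hf₀ : OrderGE f₀ 3)
    -- `s` has an almost nondegenerate critical point at `q` (normal form), …
    (hand : f₀.coeff (Finsupp.single (⟨0, hn.pos⟩ : Fin n) 3) ≠ 0)
    (g : MvPolynomial (Fin n) k) (hg : g = C α + stdQuad k n β₀ + f₀)
    -- … which is admissible: `T(s,q)` is nonsingular whenever `4 ∣ m`, or whenever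
    -- `m ≠ 2` and `s` is singular at `q`
    (hadm₁ : 4 ∣ m → SmoothQuadric (stdQuad k n β₀))
    (hadm₂ : m ≠ 2 → α = 0 → SmoothQuadric (stdQuad k n β₀))
    -- a singular point `P` of `X` over `q`, and the local defining equation of the germ
    -- `P ∈ X` given by Lemma 3.4:
    (y₀ : k) (hy₀ : y₀ ^ m = α)
    (d e : ℕ) (γ : ℕ → k) (β : k) (f : MvPolynomial (Fin n) k)
    (φ : MvPolynomial (Fin (n + 1)) k ≃ₐ[k] MvPolynomial (Fin (n + 1)) k)
    (hd : ∃ l : ℕ, d = 2 ^ l) (hd2 : 2 ∣ d) (he : 1 ≤ e) (heodd : Odd e)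
    (hm' : m = d * e) (hf : OrderGE f 3)
    (hφ : ∀ i : Fin (n + 1),
      constantCoeff (φ (X i)) =
        Fin.lastCases (motive := fun _ => k) y₀ (fun _ => (0 : k)) i)
    (heq : Ideal.span {φ (X (Fin.last n) ^ m - rename Fin.castSucc g)} =
      Ideal.span
        {(∑ i ∈ Finset.Icc 2 e, C (γ i) * X (Fin.last n) ^ (i * d)) +
          X (Fin.last n) ^ d + rename Fin.castSucc (stdQuad k n β) +
          rename Fin.castSucc f}) :
    2 < d → β ≠ 0 := by
  intro hdgt hβ0
  classical
  open MvPolynomial in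
  have h1 : n % 2 = 1 := Nat.odd_iff.mp hn
  have hn0 : 0 < n := by omega
  subst hβ0
  -- `d ≥ 4` and `4 ∣ m`
  obtain ⟨l, rfl⟩ := hd
  have hl2 : 2 ≤ l := by
    by_contra hc
    push_neg at hc
    interval_cases l <;> omega
  have hd4 : 4 ≤ 2 ^ l := by
    calc (4 : ℕ) = 2 ^ 2 := by norm_num
    _ ≤ 2 ^ l := Nat.pow_le_pow_right (by norm_num) hl2
  have h4d : (4 : ℕ) ∣ 2 ^ l := by
    refine ⟨2 ^ (l - 2), ?_⟩
    rw [show (4 : ℕ) = 2 ^ 2 by norm_num, ← pow_add]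
    congr 1
    omega
  have h4m : 4 ∣ m := hm' ▸ h4d.mul_right e
  have hβ₀ : β₀ ≠ 0 := by
    intro hc
    have hsm := hadm₁ h4m
    rw [hc] at hsm
    exact notSmoothPairs h1 hsm
  -- index bookkeeping
  set A : Fin (n / 2) → Fin n :=
    fun i => ⟨2 * ↑i + n % 2, by have := i.isLt; omega⟩ with hAdef
  set B : Fin (n / 2) → Fin n :=
    fun i => ⟨2 * ↑i + 1 + n % 2, by have := i.isLt; omega⟩ with hBdef
  set z : Fin n := ⟨0, hn0⟩ with hzdef
  have hAval : ∀ i, ((A i : Fin n) : ℕ) = 2 * ↑i + n % 2 := fun i => rfl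
  have hBval : ∀ i, ((B i : Fin n) : ℕ) = 2 * ↑i + 1 + n % 2 := fun i => rfl
  have hzval : ((z : Fin n) : ℕ) = 0 := rfl
  have hAz : ∀ i, A i ≠ z := by
    intro i hc
    have h := congrArg Fin.val hc
    rw [hAval, hzval] at h
    omega
  have hBz : ∀ i, B i ≠ z := by
    intro i hc
    have h := congrArg Fin.val hc
    rw [hBval, hzval] at h
    omega
  have hAB : ∀ i j, A i ≠ B j := by
    intro i j hc
    have h := congrArg Fin.val hc
    rw [hAval, hBval] at h
    omega
  have hBinj : ∀ i j, B i = B j → i = j := by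
    intro i j hc
    have h := congrArg Fin.val hc
    rw [hBval, hBval] at h
    exact Fin.ext (by omega)
  -- the associated unit
  rw [Ideal.span_singleton_eq_span_singleton] at heq
  obtain ⟨u, hu⟩ := heq
  obtain ⟨c, hc0, hcC⟩ := mv_isUnit_eq_C (u : MvPolynomial (Fin (n + 1)) k) u.isUnit
  rw [hcC] at hu
  -- `φ` as an `aeval`
  have hφae : ∀ q : MvPolynomial (Fin (n + 1)) k,
      φ q = MvPolynomial.aeval (fun i => φ (X i)) q := by
    intro q
    have h := MvPolynomial.aeval_unique
      (φ.toAlgHom : MvPolynomial (Fin (n + 1)) k →ₐ[k] MvPolynomial (Fin (n + 1)) k)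
    calc φ q = φ.toAlgHom q := rfl
    _ = MvPolynomial.aeval (⇑φ.toAlgHom ∘ X) q := by rw [← h]
    _ = _ := rfl
  set c0 : Fin (n + 1) → k :=
    fun i => Fin.lastCases (motive := fun _ => k) y₀ (fun _ => 0) i with hc0def
  have hPc : ∀ i, constantCoeff (φ (X i)) = c0 i := fun i => hφ i
  have hPlast : constantCoeff (φ (X (Fin.last n))) = y₀ := by
    rw [hPc, hc0def]
    simp
  set P' : Fin n → MvPolynomial (Fin (n + 1)) k := fun j => φ (X (Fin.castSucc j)) with hP'def
  have hP'const : ∀ j, constantCoeff (P' j) = 0 := by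
    intro j
    rw [hP'def]
    simp only []
    rw [hPc, hc0def]
    simp
  set L : Fin n → MvPolynomial (Fin (n + 1)) k :=
    fun j => homogeneousComponent 1 (P' j) with hLdef
  -- homogeneous component 2 of the right generator
  have hG2 : homogeneousComponent 2
      ((∑ i ∈ Finset.Icc 2 e, C (γ i) * X (Fin.last n) ^ (i * (2 ^ l))) +
        X (Fin.last n) ^ (2 ^ l) + rename Fin.castSucc (stdQuad k n 0) +
        rename Fin.castSucc f) = rename Fin.castSucc (stdQuad k n 0) := by
    rw [map_add, map_add, map_add]
    have hX1 : OrderGE (X (Fin.last n) : MvPolynomial (Fin (n + 1)) k) 1 :=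
      orderGE_one (by simp)
    have e1 : homogeneousComponent 2
        (∑ i ∈ Finset.Icc 2 e, C (γ i) * X (Fin.last n) ^ (i * (2 ^ l))) = 0 := by
      apply homogComp_eq_zero_of_orderGE (r := 3) _ (by omega)
      apply orderGE_sum
      intro i hi
      have hi2 : 2 ≤ i := (Finset.mem_Icc.mp hi).1
      refine orderGE_mono (orderGE_mul (orderGE_zero (C (γ i)))
        (orderGE_pow hX1 (i * 2 ^ l))) ?_
      have h8 : 8 ≤ i * 2 ^ l := by
        calc (8 : ℕ) = 2 * 4 := by norm_num
        _ ≤ i * 2 ^ l := Nat.mul_le_mul hi2 hd4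
      omega
    have e2 : homogeneousComponent 2
        ((X (Fin.last n) : MvPolynomial (Fin (n + 1)) k) ^ (2 ^ l)) = 0 := by
      apply homogComp_eq_zero_of_orderGE (r := 3) _ (by omega)
      exact orderGE_mono (orderGE_pow hX1 (2 ^ l)) (by simpa using hd4.trans' (by norm_num))
    have e4 : homogeneousComponent 2 (rename (Fin.castSucc (n := n)) f) = 0 :=
      homogComp_eq_zero_of_orderGE (orderGE_rename hf _) (by omega)
    have e3 : homogeneousComponent 2 (rename (Fin.castSucc (n := n)) (stdQuad k n 0)) =
        rename Fin.castSucc (stdQuad k n 0) :=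
      homog2_of_isHomogeneous ((isHomogeneous_stdQuad_zero h1).rename_isHomogeneous)
    rw [e1, e2, e3, e4, zero_add, add_zero, zero_add]
  -- homogeneous component 2 of `φ H`
  have hφH : φ (X (Fin.last n) ^ m - rename Fin.castSucc g) =
      φ (X (Fin.last n)) ^ m - MvPolynomial.aeval P' g := by
    rw [hφae, map_sub, map_pow, aeval_X, aeval_rename]
    rfl
  have hvconst : constantCoeff (φ (X (Fin.last n)) - C y₀) = 0 := by
    rw [map_sub, hPlast, constantCoeff_C, sub_self]
  have hfrob : φ (X (Fin.last n)) ^ (2 ^ l) =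
      C (y₀ ^ (2 ^ l)) + (φ (X (Fin.last n)) - C y₀) ^ (2 ^ l) := by
    haveI : Fact (Nat.Prime 2) := ⟨Nat.prime_two⟩
    have h2 : φ (X (Fin.last n)) = C y₀ + (φ (X (Fin.last n)) - C y₀) := by ring
    conv_lhs => rw [h2]
    rw [add_pow_char_pow, map_pow]
  have hEord : OrderGE (φ (X (Fin.last n)) ^ m - C α) 3 := by
    rw [hm', pow_mul, hfrob]
    have hB' : OrderGE ((φ (X (Fin.last n)) - C y₀) ^ (2 ^ l)) 3 :=
      orderGE_mono (by simpa using orderGE_pow (orderGE_one hvconst) (2 ^ l)) (by omega)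
    have hα : α = (y₀ ^ (2 ^ l)) ^ e := by rw [← pow_mul, ← hm', hy₀]
    rw [hα]
    exact binom_orderGE _ _ hB' e
  have h2last : homogeneousComponent 2 (φ (X (Fin.last n)) ^ m) = 0 := by
    have hsp : φ (X (Fin.last n)) ^ m = C α + (φ (X (Fin.last n)) ^ m - C α) := by ring
    rw [hsp, map_add, homogComp_C 2 (by omega) α,
      homogComp_eq_zero_of_orderGE hEord (by omega), add_zero]
  have h2g : homogeneousComponent 2 (MvPolynomial.aeval P' g) =
      MvPolynomial.aeval L (stdQuad k n β₀) := by
    rw [hg, map_add, map_add, map_add, map_add, aeval_C, algebraMap_eq]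
    rw [homogComp_C 2 (by omega) α, zero_add]
    rw [homogComp_eq_zero_of_orderGE (orderGE_aeval hf₀ P' hP'const) (by omega), add_zero]
    rw [aeval_stdQuad h1, aeval_stdQuad h1]
    rw [map_add, map_sum]
    congr 1
    · apply Finset.sum_congr rfl
      intro i _
      exact homog2_mul (hP'const _) (hP'const _)
    · rw [homogeneousComponent_C_mul, pow_two, pow_two, homog2_mul (hP'const _) (hP'const _)]
  have hekey : C c * MvPolynomial.aeval L (stdQuad k n β₀) =
      - rename Fin.castSucc (stdQuad k n 0) := by
    have hthis := congrArg (homogeneousComponent 2) hu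
    rw [hG2] at hthis
    rw [mul_comm, homogeneousComponent_C_mul, hφH, map_sub, h2last, h2g, zero_sub,
      mul_neg, neg_eq_iff_eq_neg] at hthis
    exact hthis
  -- fold the index functions into `hekey`
  have hstdA : MvPolynomial.aeval L (stdQuad k n β₀) =
      (∑ i : Fin (n / 2), L (A i) * L (B i)) + C β₀ * (L z) ^ 2 := by
    rw [aeval_stdQuad h1]
  have hren : rename (Fin.castSucc (n := n)) (stdQuad k n 0) =
      ∑ i : Fin (n / 2), X (Fin.castSucc (A i)) * X (Fin.castSucc (B i)) := by
    rw [rename_stdQuad_zero h1]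
  rw [hstdA, hren] at hekey
  -- the centered inverse coordinate change
  set τa : MvPolynomial (Fin (n + 1)) k →ₐ[k] MvPolynomial (Fin (n + 1)) k :=
    MvPolynomial.aeval (fun j => X j + C (c0 j)) with hτadef
  set Θ : MvPolynomial (Fin (n + 1)) k →ₐ[k] MvPolynomial (Fin (n + 1)) k :=
    τa.comp (φ.symm : MvPolynomial (Fin (n + 1)) k →ₐ[k] MvPolynomial (Fin (n + 1)) k)
    with hΘdef
  set v : Fin (n + 1) → MvPolynomial (Fin (n + 1)) k := fun i => Θ (X i) with hvdef
  have hccφ : ∀ q : MvPolynomial (Fin (n + 1)) k, constantCoeff (φ q) = eval c0 q := by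
    intro q
    induction q using MvPolynomial.induction_on with
    | C a => rw [← algebraMap_eq, AlgEquiv.commutes, algebraMap_eq, constantCoeff_C, eval_C]
    | add p q hp hq => rw [map_add, map_add, hp, hq, map_add]
    | mul_X p i hp => rw [map_mul, map_mul, hp, map_mul, eval_X, hPc i]
  have hccτ : ∀ q : MvPolynomial (Fin (n + 1)) k, constantCoeff (τa q) = eval c0 q := by
    intro q
    induction q using MvPolynomial.induction_on with
    | C a => rw [hτadef, aeval_C, algebraMap_eq, constantCoeff_C, eval_C]
    | add p q hp hq => rw [map_add, map_add, hp, hq, map_add]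
    | mul_X p i hp =>
      rw [map_mul, map_mul, hp, map_mul, eval_X, hτadef, aeval_X, map_add,
        constantCoeff_X, constantCoeff_C, zero_add]
  have hvconst0 : ∀ i, constantCoeff (v i) = 0 := by
    intro i
    rw [hvdef]
    simp only []
    rw [hΘdef, AlgHom.comp_apply, hccτ]
    have h := hccφ (φ.symm (X i))
    rw [AlgEquiv.apply_symm_apply, constantCoeff_X] at h
    exact h.symm
  have hΘu : ∀ i : Fin (n + 1), Θ (φ (X i) - C (c0 i)) = X i := by
    intro i
    rw [map_sub]
    have ha : Θ (φ (X i)) = X i + C (c0 i) := by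
      rw [hΘdef, AlgHom.comp_apply]
      rw [show (φ.symm : MvPolynomial (Fin (n + 1)) k →ₐ[k] MvPolynomial (Fin (n + 1)) k)
          (φ (X i)) = X i from by simp]
      rw [hτadef, aeval_X]
    have hb : Θ (C (c0 i)) = C (c0 i) := by
      rw [← algebraMap_eq, AlgHom.commutes]
    rw [ha, hb]
    ring
  have hΘae : ∀ q : MvPolynomial (Fin (n + 1)) k, Θ q = MvPolynomial.aeval v q := by
    intro q
    have h := MvPolynomial.aeval_unique Θ
    calc Θ q = MvPolynomial.aeval (⇑Θ ∘ X) q := by rw [← h]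
    _ = _ := rfl
  -- the Jacobian identity
  have hMN : ∀ i t : Fin (n + 1),
      (∑ j : Fin (n + 1), coeff (Finsupp.single j 1) (φ (X i)) *
        coeff (Finsupp.single t 1) (v j)) = if i = t then 1 else 0 := by
    intro i t
    have hui : constantCoeff (φ (X i) - C (c0 i)) = 0 := by
      rw [map_sub, hPc i, constantCoeff_C, sub_self]
    have h := linear_coeff_aeval v hvconst0 (φ (X i) - C (c0 i)) hui t
    rw [← hΘae, hΘu i, coeff_X'] at h
    have hco : ∀ j : Fin (n + 1),
        coeff (Finsupp.single j 1) (φ (X i) - C (c0 i)) =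
          coeff (Finsupp.single j 1) (φ (X i)) := by
      intro j
      rw [coeff_sub, coeff_C, if_neg (fun hc =>
        (one_ne_zero : (1 : ℕ) ≠ 0) (Finsupp.single_eq_zero.mp hc.symm)), sub_zero]
    simp only [hco] at h
    rw [← h]
    have hiff : (Finsupp.single i (1 : ℕ) = Finsupp.single t 1) ↔ i = t :=
      ⟨fun hc => Finsupp.single_left_injective one_ne_zero hc, fun hc => by rw [hc]⟩
    simp only [hiff]
  -- the singular direction
  set t₀ : Fin (n + 1) := Fin.castSucc z with ht₀def
  set w : Fin (n + 1) → k := fun j => coeff (Finsupp.single t₀ 1) (v j) with hwdef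
  have hLeval : ∀ j : Fin n, eval w (L j) = if j = z then 1 else 0 := by
    intro j
    rw [hLdef]
    simp only []
    rw [homog1_eq]
    rw [map_sum]
    have : ∀ t : Fin (n + 1),
        eval w (C (coeff (Finsupp.single t 1) (P' j)) * X t) =
          coeff (Finsupp.single t 1) (φ (X (Fin.castSucc j))) *
            coeff (Finsupp.single t₀ 1) (v t) := by
      intro t
      rw [eval_mul, eval_C, eval_X, hwdef]
    rw [Finset.sum_congr rfl fun t _ => this t, hMN (Fin.castSucc j) t₀, ht₀def]
    by_cases hj : j = z
    · rw [if_pos hj, if_pos (by rw [hj])]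
    · rw [if_neg hj, if_neg (by
        intro hc
        exact hj (Fin.castSucc_injective n hc))]
  -- partial-derivative evaluation: `w` vanishes on the `A`-coordinates
  have hwA : ∀ i₀ : Fin (n / 2), w (Fin.castSucc (A i₀)) = 0 := by
    intro i₀
    set t : Fin (n + 1) := Fin.castSucc (B i₀) with htdef
    have hpd : eval w (pderiv t (C c * ((∑ i : Fin (n / 2), L (A i) * L (B i)) +
        C β₀ * (L z) ^ 2))) =
        eval w (pderiv t (- ∑ i : Fin (n / 2),
          X (Fin.castSucc (A i)) * X (Fin.castSucc (B i)))) := by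
      rw [hekey]
    -- left side is zero
    have hzero : eval w (pderiv t (C c * ((∑ i : Fin (n / 2), L (A i) * L (B i)) +
        C β₀ * (L z) ^ 2))) = 0 := by
      rw [pderiv_C_mul, eval_mul, eval_C, map_add, map_sum]
      rw [map_add, map_sum]
      have hsum0 : ∀ i : Fin (n / 2), i ∈ (Finset.univ : Finset (Fin (n / 2))) →
          eval w (pderiv t (L (A i) * L (B i))) = 0 := by
        intro i _
        rw [pderiv_mul, map_add, eval_mul, eval_mul, hLeval (A i), hLeval (B i),
          if_neg (hAz i), if_neg (hBz i), mul_zero, zero_mul, add_zero]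
      rw [Finset.sum_eq_zero hsum0]
      have hβterm : eval w (pderiv t (C β₀ * (L z) ^ 2)) = 0 := by
        rw [pderiv_C_mul, eval_mul, eval_C, pow_two, pderiv_mul, map_add, eval_mul,
          eval_mul]
        have h2k : (2 : k) = 0 := CharTwo.two_eq_zero
        have : eval w (pderiv t (L z)) * eval w (L z) + eval w (L z) *
            eval w (pderiv t (L z)) = 2 * (eval w (pderiv t (L z)) * eval w (L z)) := by
          ring
        rw [this, h2k, zero_mul, mul_zero]
      rw [hβterm, add_zero, mul_zero]
    -- right side is `-(w (castSucc (A i₀)))`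
    have hterm : ∀ i : Fin (n / 2),
        eval w (pderiv t (X (Fin.castSucc (A i)) * X (Fin.castSucc (B i)))) =
          if i = i₀ then w (Fin.castSucc (A i₀)) else 0 := by
      intro i
      have hGA : pderiv t (X (Fin.castSucc (A i)) : MvPolynomial (Fin (n + 1)) k) = 0 :=
        pderiv_X_of_ne (by
          rw [htdef]
          intro hc
          exact hAB i i₀ (Fin.castSucc_injective n hc))
      rw [pderiv_mul, map_add, eval_mul, eval_mul, hGA, map_zero, zero_mul, zero_add]
      by_cases hi : i = i₀
      · subst hi
        rw [htdef, pderiv_X_self, map_one, mul_one, eval_X, if_pos rfl]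
      · rw [pderiv_X_of_ne (by
            rw [htdef]
            intro hc
            exact hi (hBinj _ _ (Fin.castSucc_injective n hc))),
          map_zero, mul_zero, if_neg hi]
    have hright : eval w (pderiv t (- ∑ i : Fin (n / 2),
        X (Fin.castSucc (A i)) * X (Fin.castSucc (B i)))) = - w (Fin.castSucc (A i₀)) := by
      rw [map_neg, map_neg, map_sum, map_sum]
      congr 1
      rw [Finset.sum_congr rfl fun i _ => hterm i,
        Finset.sum_ite_eq' Finset.univ i₀ fun _ => w (Fin.castSucc (A i₀)),
        if_pos (Finset.mem_univ i₀)]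
    rw [hzero, hright] at hpd
    exact (neg_eq_zero.mp hpd.symm)
  -- final evaluation
  have hevalL : eval w (C c * ((∑ i : Fin (n / 2), L (A i) * L (B i)) +
      C β₀ * (L z) ^ 2)) = c * β₀ := by
    rw [eval_mul, eval_C, map_add, map_sum]
    rw [Finset.sum_eq_zero (fun i _ => by
      rw [eval_mul, hLeval (A i), if_neg (hAz i), zero_mul])]
    rw [eval_mul, eval_C, map_pow, hLeval z, if_pos rfl, one_pow, mul_one, zero_add]
  have hevalR : eval w (- ∑ i : Fin (n / 2),
      X (Fin.castSucc (A i)) * X (Fin.castSucc (B i))) = 0 := by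
    rw [map_neg, map_sum]
    rw [Finset.sum_eq_zero (fun i _ => by
      rw [eval_mul, eval_X, hwA i, zero_mul]), neg_zero]
  have hfin : c * β₀ = 0 := by
    have h := congrArg (eval w) hekey
    rwa [hevalL, hevalR] at h
  exact hβ₀ (by
    rcases mul_eq_zero.mp hfin with h | h
    · exact absurd h hc0
    · exact h)
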